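/- For every natural number n, there exists a finite graph G_n such that χ(G_n) - ω(G_n) ≥ n, i.e., the gap between the chromatic number and the clique number can be arbitrarily large. -/

import Mathlib

/-- Cycle adjacency on `Fin 5`. -/
def cyc5 (a b : Fin 5) : Prop := a = b + 1 ∨ b = a + 1

instance : DecidableRel cyc5 := fun a b => inferInstanceAs (Decidable (_ ∨ _))

lemma cyc5_symm {a b : Fin 5} (h : cyc5 a b) : cyc5 b a := h.symm

lemma cyc5_irrefl (a : Fin 5) : ¬ cyc5 a a := by revert a; decide

lemma cyc5_no_triangle : ∀ a b c : Fin 5, ¬ (cyc5 a b ∧ cyc5 b c ∧ cyc5 a c) := by decide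

lemma cyc5_no_two_coloring : ¬ ∃ f : Fin 5 → Fin 2, ∀ a b, cyc5 a b → f a ≠ f b := by decide

/-- The join of `n` copies of `C₅`, on `Fin 5 × Fin n` transported to `Fin (5 * n)`. -/
def joinC5 (n : ℕ) : SimpleGraph (Fin (5 * n)) where
  Adj a b :=
    (finProdFinEquiv.symm a).2 ≠ (finProdFinEquiv.symm b).2 ∨
      ((finProdFinEquiv.symm a).2 = (finProdFinEquiv.symm b).2 ∧
        cyc5 (finProdFinEquiv.symm a).1 (finProdFinEquiv.symm b).1)
  symm := by
    constructor
    intro a b h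
    rcases h with h | ⟨h1, h2⟩
    · exact Or.inl (Ne.symm h)
    · exact Or.inr ⟨h1.symm, cyc5_symm h2⟩
  loopless := by
    constructor
    intro a h
    rcases h with h | ⟨_, h2⟩
    · exact h rfl
    · exact cyc5_irrefl _ h2

lemma joinC5_adj_same {n : ℕ} {j j' : Fin 5} {i : Fin n} (h : cyc5 j j') :
    (joinC5 n).Adj (finProdFinEquiv (j, i)) (finProdFinEquiv (j', i)) := by
  have h2 : (finProdFinEquiv.symm (finProdFinEquiv (j, i))).2 =
      (finProdFinEquiv.symm (finProdFinEquiv (j', i))).2 := by simp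
  have h1 : cyc5 (finProdFinEquiv.symm (finProdFinEquiv (j, i))).1
      (finProdFinEquiv.symm (finProdFinEquiv (j', i))).1 := by simpa using h
  exact Or.inr ⟨h2, h1⟩

lemma joinC5_adj_diff {n : ℕ} {j j' : Fin 5} {i i' : Fin n} (h : i ≠ i') :
    (joinC5 n).Adj (finProdFinEquiv (j, i)) (finProdFinEquiv (j', i')) := by
  have h2 : (finProdFinEquiv.symm (finProdFinEquiv (j, i))).2 ≠
      (finProdFinEquiv.symm (finProdFinEquiv (j', i'))).2 := by simpa using h
  exact Or.inl h2

/-- The clique number of `joinC5 n` is at most `2 * n`. -/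
lemma joinC5_cliqueNum_le (n : ℕ) : (joinC5 n).cliqueNum ≤ 2 * n := by
  obtain ⟨s, hs⟩ := (joinC5 n).exists_isNClique_cliqueNum
  rw [← hs.2]
  have := Finset.card_eq_sum_card_fiberwise
    (f := fun v : Fin (5 * n) => (finProdFinEquiv.symm v).2) (s := s) (t := Finset.univ)
    (fun _ _ => Finset.mem_univ _)
  rw [this]
  calc ∑ i ∈ Finset.univ, (s.filter fun v => (finProdFinEquiv.symm v).2 = i).card
      ≤ ∑ _i ∈ (Finset.univ : Finset (Fin n)), 2 := by
        apply Finset.sum_le_sum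
        intro i _
        by_contra hlt
        push_neg at hlt
        obtain ⟨a, b, c, ha, hb, hc, hab, hac, hbc⟩ := Finset.two_lt_card_iff.mp hlt
        simp only [Finset.mem_filter] at ha hb hc
        have hab' := hs.1 (Finset.mem_coe.mpr ha.1) (Finset.mem_coe.mpr hb.1) hab
        have hbc' := hs.1 (Finset.mem_coe.mpr hb.1) (Finset.mem_coe.mpr hc.1) hbc
        have hac' := hs.1 (Finset.mem_coe.mpr ha.1) (Finset.mem_coe.mpr hc.1) hac
        simp only [joinC5] at hab' hbc' hac'
        rw [ha.2, hb.2] at hab'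
        rw [hb.2, hc.2] at hbc'
        rw [ha.2, hc.2] at hac'
        simp only [ne_eq, not_true_eq_false, false_or, true_and] at hab' hbc' hac'
        exact cyc5_no_triangle _ _ _ ⟨hab', hbc', hac'⟩
    _ = 2 * n := by simp [Finset.sum_const, mul_comm]

/-- Any coloring of `joinC5 n` uses at least `3 * n` colors. -/
lemma joinC5_colorable_ge (n : ℕ) (m : ℕ) (h : (joinC5 n).Colorable m) : 3 * n ≤ m := by
  obtain ⟨C⟩ := h
  set S : Fin n → Finset (Fin m) :=
    fun i => Finset.univ.image (fun j : Fin 5 => C (finProdFinEquiv (j, i))) with hS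
  have hcard : ∀ i, 3 ≤ (S i).card := by
    intro i
    by_contra hlt
    push_neg at hlt
    have hle : Fintype.card ↥(S i) ≤ Fintype.card (Fin 2) := by
      rw [Fintype.card_coe, Fintype.card_fin]
      omega
    obtain ⟨emb⟩ := Function.Embedding.nonempty_of_card_le hle
    apply cyc5_no_two_coloring
    refine ⟨fun j => emb ⟨C (finProdFinEquiv (j, i)), ?_⟩, ?_⟩
    · exact Finset.mem_image.mpr ⟨j, Finset.mem_univ _, rfl⟩
    · intro a b hab hfeq
      have : C (finProdFinEquiv (a, i)) = C (finProdFinEquiv (b, i)) := by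
        have := emb.injective hfeq
        exact Subtype.mk_eq_mk.mp this
      exact C.valid (joinC5_adj_same hab) this
  have hdisj : ∀ i i' : Fin n, i ≠ i' → Disjoint (S i) (S i') := by
    intro i i' hne
    rw [Finset.disjoint_left]
    intro x hx hx'
    obtain ⟨j, _, hj⟩ := Finset.mem_image.mp hx
    obtain ⟨j', _, hj'⟩ := Finset.mem_image.mp hx'
    exact C.valid (joinC5_adj_diff hne) (hj.trans hj'.symm)
  calc 3 * n = ∑ _i ∈ (Finset.univ : Finset (Fin n)), 3 := by simp [mul_comm]
    _ ≤ ∑ i ∈ Finset.univ, (S i).card := Finset.sum_le_sum fun i _ => hcard i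
    _ = (Finset.univ.biUnion S).card :=
        (Finset.card_biUnion fun i _ i' _ h => hdisj i i' h).symm
    _ ≤ Fintype.card (Fin m) := by
        rw [← Finset.card_univ]
        exact Finset.card_le_card (Finset.subset_univ _)
    _ = m := Fintype.card_fin m

/-- The gap between the chromatic number and the clique number can be arbitrarily
large: for every `n` there is a finite graph `G` with `χ(G) - ω(G) ≥ n`. -/
theorem exists_graph_chromatic_sub_clique_ge (n : ℕ) :
    ∃ (k : ℕ) (G : SimpleGraph (Fin k)),
      (G.cliqueNum : ℕ∞) + n ≤ G.chromaticNumber := by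
  refine ⟨5 * n, joinC5 n, ?_⟩
  have h1 : ((joinC5 n).cliqueNum : ℕ∞) + n ≤ ((3 * n : ℕ) : ℕ∞) := by
    have h2 : ((joinC5 n).cliqueNum : ℕ∞) ≤ ((2 * n : ℕ) : ℕ∞) := by
      exact_mod_cast joinC5_cliqueNum_le n
    have h3 := add_le_add h2 (le_refl (n : ℕ∞))
    refine h3.trans ?_
    rw [← Nat.cast_add]
    norm_cast
    omega
  refine h1.trans ?_
  rw [SimpleGraph.chromaticNumber_eq_biInf]
  refine le_iInf₂ fun m hm => ?_
  exact_mod_cast joinC5_colorable_ge n m hm
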